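/- Let A ∈ ℝ^{n×n} be Schur stable (every eigenvalue of A has modulus strictly less than 1), let B ∈ ℝ^{n×m}, and let M ∈ ℝ^{(n+m)×(n+m)} be symmetric with positive semidefinite upper-left n×n block M₁₁. If a symmetric matrix P ∈ ℝ^{n×n} satisfies M + [[AᵀPA − P, AᵀPB],[BᵀPA, BᵀPB]] ≺ 0 (negative definite), then P is positive definite. -/

import Mathlib

open Matrix
open Filter Topology ENNReal NNReal


attribute [local instance]
  Matrix.linftyOpNormedAddCommGroup Matrix.linftyOpNormedRing
  Matrix.linftyOpNormedSpace Matrix.linftyOpNormedAlgebra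

set_option maxHeartbeats 1000000 in
lemma aux_entry_le {p : ℕ} (M : Matrix (Fin p) (Fin p) ℂ) (i j : Fin p) :
    ‖M i j‖ ≤ ‖M‖ := by
  have h1 : ‖M i j‖₊ ≤ ∑ j' : Fin p, ‖M i j'‖₊ :=
    Finset.single_le_sum (f := fun j' => ‖M i j'‖₊) (fun _ _ => zero_le) (Finset.mem_univ j)
  have h2 : (∑ j' : Fin p, ‖M i j'‖₊) ≤ ‖M‖₊ := by
    rw [Matrix.linfty_opNNNorm_def]
    exact Finset.le_sup (f := fun i => ∑ j' : Fin p, ‖M i j'‖₊) (Finset.mem_univ i)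
  exact_mod_cast h1.trans h2

example {p : ℕ} [Nonempty (Fin p)] : Nontrivial (Matrix (Fin p) (Fin p) ℂ) := inferInstance
example {p : ℕ} : CompleteSpace (Matrix (Fin p) (Fin p) ℂ) := FiniteDimensional.complete ℂ _

lemma aux_norm_pow_tendsto {𝔸 : Type*} [NormedRing 𝔸] [NormedAlgebra ℂ 𝔸] [CompleteSpace 𝔸]
    {a : 𝔸} (ha : spectralRadius ℂ a < 1) :
    Tendsto (fun k : ℕ => ‖a ^ k‖) atTop (𝓝 0) := by
  obtain ⟨r, hr1, hr2⟩ := ENNReal.lt_iff_exists_nnreal_btwn.mp ha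
  have hr2' : (r : ℝ) < 1 := by exact_mod_cast hr2
  have hgel := spectrum.pow_nnnorm_pow_one_div_tendsto_nhds_spectralRadius a
  have hev : ∀ᶠ k : ℕ in atTop, (‖a ^ k‖₊ : ℝ≥0∞) ^ (1 / (k : ℝ)) < (r : ℝ≥0∞) :=
    hgel.eventually_lt_const hr1
  have hbound : ∀ᶠ k : ℕ in atTop, ‖a ^ k‖ ≤ (r : ℝ) ^ k := by
    filter_upwards [hev, eventually_ge_atTop 1] with k hk hk1
    have hk0 : (k : ℝ) ≠ 0 := by positivity
    have h2 := ENNReal.rpow_lt_rpow hk (by positivity : (0:ℝ) < (k : ℝ))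
    rw [← ENNReal.rpow_mul, one_div_mul_cancel hk0, ENNReal.rpow_one,
      ENNReal.rpow_natCast] at h2
    have h3 : ‖a ^ k‖₊ < r ^ k := by
      rw [← ENNReal.coe_pow] at h2
      exact_mod_cast h2
    have h4 : (‖a ^ k‖₊ : ℝ) ≤ ((r ^ k : ℝ≥0) : ℝ) := by exact_mod_cast h3.le
    simpa using h4
  have hpow : Tendsto (fun k : ℕ => (r : ℝ) ^ k) atTop (𝓝 0) :=
    tendsto_pow_atTop_nhds_zero_of_lt_one r.2 hr2'
  exact squeeze_zero' (Eventually.of_forall fun k => norm_nonneg _) hbound hpow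

set_option maxHeartbeats 1000000 in
lemma aux_pow_entry_tendsto {p : ℕ} [Nonempty (Fin p)] (A : Matrix (Fin p) (Fin p) ℝ)
    (hA : ∀ z ∈ spectrum ℂ (A.map (algebraMap ℝ ℂ)), ‖z‖ < 1) (i j : Fin p) :
    Tendsto (fun k : ℕ => (A ^ k) i j) atTop (𝓝 0) := by
  haveI : CompleteSpace (Matrix (Fin p) (Fin p) ℂ) := FiniteDimensional.complete ℂ _
  set Ac : Matrix (Fin p) (Fin p) ℂ := A.map (algebraMap ℝ ℂ) with hAc
  have hrad : spectralRadius ℂ Ac < 1 := by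
    have := spectrum.spectralRadius_lt_of_forall_lt Ac (r := 1)
      (fun z hz => by simpa [← NNReal.coe_lt_coe] using hA z hz)
    simpa using this
  have htend := aux_norm_pow_tendsto hrad
  have hmp : ∀ k : ℕ, Ac ^ k = (A ^ k).map (algebraMap ℝ ℂ) := by
    intro k
    simpa [RingHom.mapMatrix_apply, hAc] using
      (map_pow ((algebraMap ℝ ℂ).mapMatrix) A k).symm
  have hb : ∀ k : ℕ, |(A ^ k) i j| ≤ ‖Ac ^ k‖ := by
    intro k
    have h := aux_entry_le (Ac ^ k) i j
    have h2 : ‖(Ac ^ k) i j‖ = |(A ^ k) i j| := by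
      rw [hmp k]; simp [Matrix.map_apply]
    rw [h2] at h
    exact h
  refine squeeze_zero_norm (fun k => ?_) htend
  simpa using hb _


/-- If `A` is Schur stable and the upper-left block of `M` is PSD, then any
symmetric solution `P` of the strict LMI is positive definite. -/
theorem posdef_of_schur_and_LMI {n m : ℕ}
    (A : Matrix (Fin n) (Fin n) ℝ)
    (hA : ∀ z ∈ spectrum ℂ (A.map (algebraMap ℝ ℂ)), ‖z‖ < 1)
    (B : Matrix (Fin n) (Fin m) ℝ)
    (M : Matrix (Fin n ⊕ Fin m) (Fin n ⊕ Fin m) ℝ)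
    (hM : M.IsHermitian)
    (hM11 : (M.toBlocks₁₁).PosSemidef)
    (P : Matrix (Fin n) (Fin n) ℝ) (hP : P.IsHermitian)
    (hLMI : (-(M + fromBlocks (Aᵀ * P * A - P) (Aᵀ * P * B) (Bᵀ * P * A)
      (Bᵀ * P * B))).PosDef) :
    P.PosDef := by
  classical
  refine Matrix.PosDef.of_dotProduct_mulVec_pos hP (fun x hx => ?_)
  have hn : n ≠ 0 := by
    rintro rfl
    exact hx (Subsingleton.elim x 0)
  haveI : Nonempty (Fin n) := Fin.pos_iff_nonempty.mp (Nat.pos_of_ne_zero hn)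
  set R : Matrix (Fin n) (Fin n) ℝ := P - Aᵀ * P * A with hRdef
  have hQ : ∀ y : Fin n → ℝ, y ≠ 0 → 0 < y ⬝ᵥ ((-(M.toBlocks₁₁ + (Aᵀ * P * A - P))) *ᵥ y) := by
    intro y hy
    have hy' : (Sum.elim y 0 : Fin n ⊕ Fin m → ℝ) ≠ 0 := by
      intro h
      apply hy
      funext i
      simpa using congrFun h (Sum.inl i)
    have h := hLMI.dotProduct_mulVec_pos hy'
    rw [← Matrix.fromBlocks_toBlocks M] at h
    simpa [Matrix.fromBlocks_add, Matrix.fromBlocks_neg, Matrix.fromBlocks_mulVec,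
      sumElim_dotProduct_sumElim, star_trivial] using h
  have hR : ∀ y : Fin n → ℝ, y ≠ 0 → 0 < y ⬝ᵥ (R *ᵥ y) := by
    intro y hy
    have h1 := hQ y hy
    have h2 : (0:ℝ) ≤ y ⬝ᵥ (M.toBlocks₁₁ *ᵥ y) := by
      simpa [star_trivial] using hM11.dotProduct_mulVec_nonneg y
    have h3 : R = -(M.toBlocks₁₁ + (Aᵀ * P * A - P)) + M.toBlocks₁₁ := by
      rw [hRdef]; abel
    rw [h3, Matrix.add_mulVec, dotProduct_add]
    linarith
  have hRnn : ∀ y : Fin n → ℝ, 0 ≤ y ⬝ᵥ (R *ᵥ y) := by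
    intro y
    by_cases hy : y = 0
    · simp [hy]
    · exact (hR y hy).le
  have key : ∀ v : Fin n → ℝ,
      (A *ᵥ v) ⬝ᵥ (P *ᵥ (A *ᵥ v)) = v ⬝ᵥ ((Aᵀ * P * A) *ᵥ v) := by
    intro v
    rw [Matrix.mulVec_mulVec, dotProduct_mulVec, dotProduct_mulVec,
      ← Matrix.vecMul_transpose]
    simp [Matrix.vecMul_vecMul, Matrix.mul_assoc]
  have htel : ∀ k : ℕ, (A ^ k *ᵥ x) ⬝ᵥ (P *ᵥ (A ^ k *ᵥ x)) =
      (A ^ (k+1) *ᵥ x) ⬝ᵥ (P *ᵥ (A ^ (k+1) *ᵥ x))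
        + (A ^ k *ᵥ x) ⬝ᵥ (R *ᵥ (A ^ k *ᵥ x)) := by
    intro k
    have h1 : A ^ (k + 1) *ᵥ x = A *ᵥ (A ^ k *ᵥ x) := by
      rw [pow_succ', Matrix.mulVec_mulVec]
    rw [h1, key, hRdef, Matrix.sub_mulVec, dotProduct_sub]
    ring
  have hmono : ∀ N : ℕ, (A ^ (N+1) *ᵥ x) ⬝ᵥ (P *ᵥ (A ^ (N+1) *ᵥ x)) + x ⬝ᵥ (R *ᵥ x)
      ≤ x ⬝ᵥ (P *ᵥ x) := by
    intro N
    induction N with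
    | zero =>
      have h := htel 0
      simp only [pow_zero, Matrix.one_mulVec] at h
      linarith
    | succ N ih =>
      have h := htel (N + 1)
      have hnn := hRnn (A ^ (N + 1) *ᵥ x)
      linarith
  have hvec : Tendsto (fun k : ℕ => A ^ k *ᵥ x) atTop (𝓝 0) := by
    rw [tendsto_pi_nhds]
    intro i
    have h : Tendsto (fun k : ℕ => ∑ j, (A ^ k) i j * x j) atTop (𝓝 (∑ j : Fin n, 0)) := by
      refine tendsto_finset_sum _ fun j _ => ?_
      simpa using (aux_pow_entry_tendsto A hA i j).mul_const (x j)
    simpa [Matrix.mulVec, dotProduct] using h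
  have hcont : Continuous fun v : Fin n → ℝ => v ⬝ᵥ (P *ᵥ v) := by
    simp only [dotProduct, Matrix.mulVec]
    fun_prop
  have hgtend : Tendsto (fun k : ℕ => (A ^ k *ᵥ x) ⬝ᵥ (P *ᵥ (A ^ k *ᵥ x))) atTop (𝓝 0) := by
    have h := (hcont.tendsto 0).comp hvec
    simpa only [Function.comp_def, zero_dotProduct, Matrix.mulVec_zero] using h
  have hlim : Tendsto (fun N : ℕ => (A ^ (N+1) *ᵥ x) ⬝ᵥ (P *ᵥ (A ^ (N+1) *ᵥ x)) + x ⬝ᵥ (R *ᵥ x))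
      atTop (𝓝 (0 + x ⬝ᵥ (R *ᵥ x))) :=
    (hgtend.comp (tendsto_add_atTop_nat 1)).add tendsto_const_nhds
  have hfin : 0 + x ⬝ᵥ (R *ᵥ x) ≤ x ⬝ᵥ (P *ᵥ x) :=
    le_of_tendsto hlim (Eventually.of_forall hmono)
  have hpos := hR x hx
  have : (0:ℝ) < x ⬝ᵥ (P *ᵥ x) := by linarith
  simpa [star_trivial] using this
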